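/- Let X ⊆ E be a closed convex subset of a finite-dimensional real normed space, let f and g be strongly convex on X with the same parameter μ > 0 (i.e. f(y) ≥ f(x) + ⟨∇f(x), y−x⟩ + (μ/2)‖y−x‖_E² for all x,y ∈ X and all subgradients, and similarly for g), and let x_* be a solution of the regular problem min{ f(x) : x ∈ X, g(x) ≤ 0 } (there exists x̄ in the relative interior of X with g(x̄) < 0). If a point x̃ ∈ X satisfies f(x̃) − f(x_*) ≤ ε and g(x̃) ≤ ε, then (μ/2)‖x̃ − x_*‖_E² ≤ ε. -/

import Mathlib

/-- `p` is a subgradient of `f` at `x` relative to the set `X`. -/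
def IsSubgradOn {E : Type*} [NormedAddCommGroup E] [NormedSpace ℝ E]
    (X : Set E) (f : E → ℝ) (x : E) (p : E →L[ℝ] ℝ) : Prop :=
  ∀ y ∈ X, f x + p (y - x) ≤ f y

open Set Filter Topology

section Aux

variable {E : Type*} [NormedAddCommGroup E] [NormedSpace ℝ E]

lemma intrinsic_ball {X : Set E} {y : E} (hy : y ∈ intrinsicInterior ℝ X) :
    ∃ δ > 0, ∀ v ∈ (affineSpan ℝ X).direction, ‖v‖ < δ → y + v ∈ X := by
  obtain ⟨q, hq, rfl⟩ := hy
  obtain ⟨δ, hδ, hball⟩ := Metric.mem_nhds_iff.1 (mem_interior_iff_mem_nhds.1 hq)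
  refine ⟨δ, hδ, fun v hv hnv => ?_⟩
  have hmem : v +ᵥ (q : E) ∈ affineSpan ℝ X := AffineSubspace.vadd_mem_of_mem_direction hv q.2
  have : (⟨v +ᵥ (q : E), hmem⟩ : affineSpan ℝ X) ∈ Metric.ball q δ := by
    simp [Metric.mem_ball, Subtype.dist_eq, dist_eq_norm, hnv]
  have := hball this
  simpa [add_comm] using this

lemma intrinsic_of_ball {X : Set E} {y : E} (hyX : y ∈ X) {δ : ℝ} (hδ : 0 < δ)
    (h : ∀ v ∈ (affineSpan ℝ X).direction, ‖v‖ < δ → y + v ∈ X) :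
    y ∈ intrinsicInterior ℝ X := by
  have hy' : y ∈ affineSpan ℝ X := subset_affineSpan ℝ X hyX
  refine ⟨⟨y, hy'⟩, ?_, rfl⟩
  rw [mem_interior_iff_mem_nhds, Metric.mem_nhds_iff]
  refine ⟨δ, hδ, fun q' hq' => ?_⟩
  have h1 : ((q' : E) - y) ∈ (affineSpan ℝ X).direction := by
    simpa using AffineSubspace.vsub_mem_direction q'.2 hy'
  have h2 : ‖(q' : E) - y‖ < δ := by
    simpa [Subtype.dist_eq, dist_eq_norm] using hq'
  have := h _ h1 h2
  simpa using this

lemma convexOn_loc_bdd {W : Type*} [NormedAddCommGroup W] [NormedSpace ℝ W]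
    [FiniteDimensional ℝ W]
    {S : Set W} (hS : Convex ℝ S) {F : W → ℝ} (hF : ConvexOn ℝ S F) (h0 : (0:W) ∈ interior S) :
    ∃ U : Set W, IsOpen U ∧ (0:W) ∈ U ∧ U ⊆ S ∧ ∃ M : ℝ, ∀ w ∈ U, F w ≤ M := by
  classical
  obtain ⟨ρ, hρ, hball⟩ := Metric.mem_nhds_iff.1 (mem_interior_iff_mem_nhds.1 h0)
  set n := Module.finrank ℝ W
  set b := Module.finBasis ℝ W with hb
  set B : ℝ := 1 + ∑ i, ‖b i‖ with hB
  have hBpos : 0 < B := by positivity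
  set r : ℝ := ρ / (2 * B) with hr
  have hrpos : 0 < r := by positivity
  -- each vertex ±r • b i is in the ball
  have hvert : ∀ (i : Fin n) (σ : ℝ), |σ| ≤ 1 → (r * σ) • b i ∈ S := by
    intro i σ hσ
    apply hball
    rw [Metric.mem_ball, dist_zero_right, norm_smul]
    have h1 : ‖b i‖ ≤ B - 1 := by
      rw [hB]; simp only [add_sub_cancel_left]
      exact Finset.single_le_sum (f := fun i => ‖b i‖) (fun i _ => norm_nonneg _) (Finset.mem_univ i)
    have h2 : |r * σ| ≤ r := by
      rw [abs_mul, abs_of_pos hrpos]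
      nlinarith
    have h3 : ‖b i‖ < B := by linarith
    calc ‖r * σ‖ * ‖b i‖ ≤ r * B := by
          rw [Real.norm_eq_abs]
          apply mul_le_mul h2 h3.le (norm_nonneg _) hrpos.le
      _ < ρ := by rw [hr]; rw [div_mul_eq_mul_div]; rw [div_lt_iff₀ (by positivity)]; nlinarith
  set N : W → ℝ := fun w => ∑ i, |b.repr w i| with hN
  have hNcont : Continuous N := by
    apply continuous_finset_sum
    intro i _
    have : Continuous fun w => b.repr w i :=
      LinearMap.continuous_of_finiteDimensional
        ((Finsupp.lapply i).comp (b.repr : W →ₗ[ℝ] (Fin n →₀ ℝ)))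
    exact this.abs
  set U : Set W := {w | N w < r} with hU
  have hUopen : IsOpen U := isOpen_lt hNcont continuous_const
  have hU0 : (0:W) ∈ U := by simp [hU, hN, hrpos]
  have signabs : ∀ x : ℝ, |Real.sign x| ≤ 1 := by
    intro x
    rcases Real.sign_apply_eq x with h | h | h <;> rw [h] <;> norm_num
  have signmulabs : ∀ x : ℝ, Real.sign x * |x| = x := by
    intro x
    rcases lt_trichotomy x 0 with h | h | h
    · rw [Real.sign_of_neg h, abs_of_neg h]; ring
    · simp [h]
    · rw [Real.sign_of_pos h, abs_of_pos h]; ring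
  set M : ℝ := max 0 (F 0) + ∑ i, (max 0 (F (r • b i)) + max 0 (F ((-r) • b i))) with hM
  refine ⟨U, hUopen, hU0, ?_, M, ?_⟩
  all_goals {
  intro w hw
  have hNw : 0 ≤ N w := Finset.sum_nonneg fun i _ => abs_nonneg _
  have hNwr : N w < r := hw
  set c : Fin n → ℝ := fun i => b.repr w i with hc
  set tt : Option (Fin n) → ℝ := fun o => o.elim (1 - N w / r) (fun i => |c i| / r) with htt
  set zz : Option (Fin n) → W := fun o =>
    o.elim 0 (fun i => (r * Real.sign (c i)) • b i) with hzz
  have h₀ : ∀ o ∈ Finset.univ, 0 ≤ tt (o : Option (Fin n)) := by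
    rintro (_ | i) _
    · simp only [htt, Option.elim]
      have : N w / r < 1 := (div_lt_one hrpos).2 hNwr
      linarith
    · simp only [htt, Option.elim]
      positivity
  have h₁ : ∑ o : Option (Fin n), tt o = 1 := by
    rw [Fintype.sum_option]
    simp only [htt, Option.elim]
    rw [← Finset.sum_div]
    have hNw' : (∑ i : Fin n, |c i|) = N w := rfl
    rw [hNw']
    field_simp
    ring
  have hmem : ∀ o ∈ Finset.univ, zz (o : Option (Fin n)) ∈ S := by
    rintro (_ | i) _
    · exact interior_subset h0
    · exact hvert i _ (signabs _)
  have hsum : ∑ o : Option (Fin n), tt o • zz o = w := by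
    rw [Fintype.sum_option]
    simp only [htt, hzz, Option.elim, smul_zero, zero_add, smul_smul]
    have : ∀ i : Fin n, |c i| / r * (r * Real.sign (c i)) = c i := by
      intro i
      calc |c i| / r * (r * Real.sign (c i)) = Real.sign (c i) * |c i| * (r / r) := by ring
        _ = c i := by rw [div_self hrpos.ne', mul_one, signmulabs]
    simp only [this]
    exact b.sum_repr w
  have hwS : w ∈ S := by
    rw [← hsum]; exact hS.sum_mem h₀ h₁ hmem
  first
  | exact hwS
  | {
  have hje : F w ≤ ∑ o : Option (Fin n), tt o * F (zz o) := by
    rw [← hsum]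
    exact hF.map_sum_le h₀ h₁ hmem
  refine hje.trans ?_
  rw [Fintype.sum_option, hM]
  have tmul : ∀ t x : ℝ, 0 ≤ t → t ≤ 1 → t * x ≤ max 0 x := by
    intro t x ht ht1
    rcases le_total x 0 with h | h
    · exact (mul_nonpos_of_nonneg_of_nonpos ht h).trans (le_max_left _ _)
    · calc t * x ≤ 1 * x := mul_le_mul_of_nonneg_right ht1 h
        _ = x := one_mul x
        _ ≤ max 0 x := le_max_right _ _
  have habs : ∀ i : Fin n, |c i| ≤ N w := fun i =>
    Finset.single_le_sum (f := fun j => |c j|) (fun j _ => abs_nonneg _) (Finset.mem_univ i)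
  apply add_le_add
  · simp only [htt, hzz, Option.elim]
    have h1 : N w / r ≥ 0 := by positivity
    exact tmul _ _ (by have := (div_lt_one hrpos).2 hNwr; linarith) (by linarith)
  · apply Finset.sum_le_sum
    intro i _
    simp only [htt, hzz, Option.elim]
    have ht0 : 0 ≤ |c i| / r := by positivity
    have ht1 : |c i| / r ≤ 1 := by
      rw [div_le_one hrpos]; exact (habs i).trans hNwr.le
    rcases Real.sign_apply_eq (c i) with h | h | h
    · rw [h]
      have he : (r * (-1:ℝ)) • b i = (-r) • b i := by norm_num
      rw [he]
      exact le_add_of_nonneg_left (le_max_left _ _) |>.trans'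
        (tmul _ _ ht0 ht1)
    · have : c i = 0 := Real.sign_eq_zero_iff.1 h
      rw [this]
      simp only [abs_zero, zero_div, zero_mul]
      exact add_nonneg (le_max_left _ _) (le_max_left _ _)
    · rw [h]
      have he : (r * (1:ℝ)) • b i = r • b i := by norm_num
      rw [he]
      exact le_add_of_nonneg_right (le_max_left _ _) |>.trans'
        (tmul _ _ ht0 ht1) }
  }

lemma exists_subgrad_interior {W : Type*} [NormedAddCommGroup W] [NormedSpace ℝ W]
    [FiniteDimensional ℝ W]
    {S : Set W} (hS : Convex ℝ S) {F : W → ℝ} (hF : ConvexOn ℝ S F) (h0 : (0:W) ∈ interior S) :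
    ∃ q : W →L[ℝ] ℝ, ∀ w ∈ S, F 0 + q w ≤ F w := by
  obtain ⟨U, hUopen, hU0, hUS, M, hM⟩ := convexOn_loc_bdd hS hF h0
  set T : Set (W × ℝ) := {p | p.1 ∈ S ∧ F p.1 ≤ p.2} with hT
  have hTconv : Convex ℝ T := by
    rintro ⟨x, rx⟩ ⟨hx, hfx⟩ ⟨y, ry⟩ ⟨hy, hfy⟩ a b ha hb hab
    refine ⟨hS hx hy ha hb hab, ?_⟩
    have := hF.2 hx hy ha hb hab
    simp only [Prod.smul_mk, Prod.mk_add_mk, smul_eq_mul]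
    calc F (a • x + b • y) ≤ a * F x + b * F y := this
      _ ≤ a * rx + b * ry := by
          apply add_le_add <;> apply mul_le_mul_of_nonneg_left <;> assumption
  -- the open set inside T
  set O : Set (W × ℝ) := {p | p.1 ∈ U ∧ M < p.2} with hO
  have hOopen : IsOpen O := (hUopen.preimage continuous_fst).inter
    (isOpen_lt continuous_const continuous_snd)
  have hOT : O ⊆ T := fun p hp => ⟨hUS hp.1, (hM _ hp.1).trans hp.2.le⟩
  have hOmem : ((0:W), M + 1) ∈ O := ⟨hU0, by change M < M + 1; linarith⟩
  have hint : ((0:W), M + 1) ∈ interior T := interior_maximal hOT hOopen hOmem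
  -- the point (0, F 0) is not in the interior of T
  have hnot : ((0:W), F 0) ∉ interior T := by
    intro h
    obtain ⟨ρ, hρ, hball⟩ := Metric.mem_nhds_iff.1 (mem_interior_iff_mem_nhds.1 h)
    have hmem : ((0:W), F 0 - ρ/2) ∈ Metric.ball ((0:W), F 0) ρ := by
      rw [Metric.mem_ball, Prod.dist_eq]
      simp [Real.dist_eq, abs_of_pos hρ, hρ]
    have := (hball hmem).2
    simp only at this
    linarith
  obtain ⟨φ, hφ⟩ := geometric_hahn_banach_open_point (hTconv.interior) isOpen_interior hnot
  -- φ ≤ φ (0, F 0) on all of T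
  have hφT : ∀ p ∈ T, φ p ≤ φ ((0:W), F 0) := by
    intro p hp
    have hseg : ∀ θ : ℝ, θ ∈ Ioo (0:ℝ) 1 →
        φ (θ • ((0:W), M + 1) + (1 - θ) • p) < φ ((0:W), F 0) := by
      intro θ hθ
      apply hφ
      exact hTconv.combo_interior_closure_mem_interior hint (subset_closure hp)
        hθ.1 (by linarith [hθ.2]) (by ring)
    have htend : Tendsto (fun θ : ℝ => φ (θ • ((0:W), M + 1) + (1 - θ) • p))
        (𝓝[>] (0:ℝ)) (𝓝 (φ p)) := by
      have hc : Continuous fun θ : ℝ => φ (θ • ((0:W), M + 1) + (1 - θ) • p) := by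
        fun_prop
      have := hc.tendsto 0
      simp only [zero_smul, sub_zero, one_smul, zero_add] at this
      exact this.mono_left nhdsWithin_le_nhds
    refine le_of_tendsto htend ?_
    filter_upwards [Ioo_mem_nhdsGT_of_mem (Set.left_mem_Ico.2 zero_lt_one)] with θ hθ
    exact (hseg θ hθ).le
  -- decompose φ
  set β : ℝ := φ ((0:W), (1:ℝ)) with hβ
  have hdec : ∀ (w : W) (ρ : ℝ), φ (w, ρ) = φ (w, 0) + ρ * β := by
    intro w ρ
    have : (w, ρ) = (w, (0:ℝ)) + ρ • ((0:W), (1:ℝ)) := by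
      simp [Prod.ext_iff]
    rw [this, map_add, map_smul]
    simp [hβ]
  have hβneg : β < 0 := by
    have h1 := hφ _ hint
    rw [hdec 0 (M+1), hdec 0 (F 0)] at h1
    have hFM : F 0 ≤ M := hM 0 hU0
    nlinarith
  refine ⟨(-β)⁻¹ • (φ.comp (ContinuousLinearMap.inl ℝ W ℝ)), fun w hw => ?_⟩
  have h1 : φ (w, F w) ≤ φ ((0:W), F 0) := hφT _ ⟨hw, le_refl _⟩
  rw [hdec w (F w), hdec 0 (F 0)] at h1
  have h2 : φ ((0:W), (0:ℝ)) = 0 := by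
    have : ((0:W), (0:ℝ)) = (0 : W × ℝ) := rfl
    rw [this, map_zero]
  rw [h2, zero_add] at h1
  simp only [ContinuousLinearMap.smul_apply, ContinuousLinearMap.comp_apply,
    ContinuousLinearMap.inl_apply, smul_eq_mul]
  have hβpos : 0 < -β := by linarith
  have h3 : (-β)⁻¹ * φ (w, 0) ≤ F w - F 0 := by
    rw [inv_mul_le_iff₀ hβpos]
    nlinarith
  linarith

lemma exists_subgrad_intrinsic {E : Type*} [NormedAddCommGroup E] [NormedSpace ℝ E]
    [FiniteDimensional ℝ E]
    {X : Set E} (hX : Convex ℝ X) {f : E → ℝ} (hf : ConvexOn ℝ X f)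
    {y : E} (hy : y ∈ intrinsicInterior ℝ X) :
    ∃ p : E →L[ℝ] ℝ, IsSubgradOn X f y p := by
  have hyX : y ∈ X := intrinsicInterior_subset hy
  have hyP : y ∈ affineSpan ℝ X := subset_affineSpan ℝ X hyX
  obtain ⟨δ, hδ, hball⟩ := intrinsic_ball hy
  set D := (affineSpan ℝ X).direction with hD
  set S : Set D := {w | y + (w : E) ∈ X} with hSdef
  set F : D → ℝ := fun w => f (y + (w : E)) with hFdef
  have hcombo : ∀ (w₁ w₂ : D) (a b : ℝ), a + b = 1 →
      y + ((a • w₁ + b • w₂ : D) : E) = a • (y + (w₁ : E)) + b • (y + (w₂ : E)) := by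
    intro w₁ w₂ a b hab
    push_cast
    match_scalars <;> linarith
  have hSconv : Convex ℝ S := by
    intro w₁ hw₁ w₂ hw₂ a b ha hb hab
    show y + ((a • w₁ + b • w₂ : D) : E) ∈ X
    rw [hcombo w₁ w₂ a b hab]
    exact hX hw₁ hw₂ ha hb hab
  have hFconv : ConvexOn ℝ S F := by
    refine ⟨hSconv, fun w₁ hw₁ w₂ hw₂ a b ha hb hab => ?_⟩
    show f (y + ((a • w₁ + b • w₂ : D) : E)) ≤ _
    rw [hcombo w₁ w₂ a b hab]
    exact hf.2 hw₁ hw₂ ha hb hab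
  have h0 : (0 : D) ∈ interior S := by
    rw [mem_interior_iff_mem_nhds, Metric.mem_nhds_iff]
    refine ⟨δ, hδ, fun w hw => ?_⟩
    have : ‖(w : E)‖ < δ := by
      rw [Metric.mem_ball, dist_zero_right] at hw
      simpa using hw
    exact hball (w : E) w.2 this
  obtain ⟨q, hq⟩ := exists_subgrad_interior hSconv hFconv h0
  obtain ⟨D', hcompl⟩ := Submodule.exists_isCompl D
  set proj := D.linearProjOfIsCompl D' hcompl with hproj
  set p := (q.toLinearMap.comp proj).toContinuousLinearMap with hp
  refine ⟨p, fun z hz => ?_⟩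
  have hv : z - y ∈ D := by
    simpa using AffineSubspace.vsub_mem_direction (subset_affineSpan ℝ X hz) hyP
  set w : D := ⟨z - y, hv⟩ with hw
  have hwS : w ∈ S := by
    show y + (z - y) ∈ X
    simpa using hz
  have hq' := hq w hwS
  have hF0 : F 0 = f y := by simp [hFdef]
  have hFw : F w = f z := by simp [hFdef, hw]
  have hpw : p (z - y) = q w := by
    have : p (z - y) = q (proj (z - y)) := rfl
    rw [this]
    have : proj (z - y) = w := by
      have := Submodule.linearProjOfIsCompl_apply_left hcompl w
      exact this
    rw [this]
  rw [hF0, hFw] at hq'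
  rw [hpw]
  exact hq'

lemma intrinsic_combo {E : Type*} [NormedAddCommGroup E] [NormedSpace ℝ E]
    {X : Set E} (hXconv : Convex ℝ X) {xbar w : E}
    (hxbar : xbar ∈ intrinsicInterior ℝ X) (hw : w ∈ X)
    {s : ℝ} (hs : 0 < s) (hs1 : s ≤ 1) :
    (1 - s) • w + s • xbar ∈ intrinsicInterior ℝ X := by
  obtain ⟨δ, hδ, hball⟩ := intrinsic_ball hxbar
  have hxbarX : xbar ∈ X := intrinsicInterior_subset hxbar
  have hzX : (1 - s) • w + s • xbar ∈ X :=
    hXconv hw hxbarX (by linarith) hs.le (by ring)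
  refine intrinsic_of_ball hzX (show (0:ℝ) < s * δ by positivity) ?_
  intro v hv hnv
  have h1 : s⁻¹ • v ∈ (affineSpan ℝ X).direction := Submodule.smul_mem _ _ hv
  have h2 : ‖s⁻¹ • v‖ < δ := by
    rw [norm_smul, Real.norm_eq_abs, abs_of_pos (inv_pos.2 hs)]
    rw [inv_mul_lt_iff₀ hs]
    linarith [hnv]
  have h3 : xbar + s⁻¹ • v ∈ X := hball _ h1 h2
  have h4 : (1 - s) • w + s • xbar + v = (1 - s) • w + s • (xbar + s⁻¹ • v) := by
    rw [smul_add, smul_smul, mul_inv_cancel₀ hs.ne', one_smul]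
    abel
  rw [h4]
  exact hXconv hw h3 (by linarith) hs.le (by ring)

lemma strong_combo {E : Type*} [NormedAddCommGroup E] [NormedSpace ℝ E]
    [FiniteDimensional ℝ E]
    {X : Set E} (hXconv : Convex ℝ X) {h : E → ℝ} (hconv : ConvexOn ℝ X h) {μ : ℝ}
    (hsc : ∀ x ∈ X, ∀ p : E →L[ℝ] ℝ, IsSubgradOn X h x p →
      ∀ y ∈ X, h x + p (y - x) + μ / 2 * ‖y - x‖ ^ 2 ≤ h y)
    {u v : E} (hu : u ∈ X) (hv : v ∈ X) {t : ℝ} (ht0 : 0 < t) (ht1 : t < 1)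
    (hz : (1 - t) • u + t • v ∈ intrinsicInterior ℝ X) :
    h ((1 - t) • u + t • v) + μ / 2 * (t * (1 - t)) * ‖v - u‖ ^ 2
      ≤ (1 - t) * h u + t * h v := by
  set z := (1 - t) • u + t • v with hzdef
  have hzX : z ∈ X := hXconv hu hv (by linarith) ht0.le (by ring)
  obtain ⟨p, hp⟩ := exists_subgrad_intrinsic hXconv hconv hz
  have h1 := hsc z hzX p hp u hu
  have h2 := hsc z hzX p hp v hv
  have hu_z : u - z = (-t) • (v - u) := by rw [hzdef]; module
  have hv_z : v - z = (1 - t) • (v - u) := by rw [hzdef]; module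
  have hn1 : ‖u - z‖ ^ 2 = t ^ 2 * ‖v - u‖ ^ 2 := by
    rw [hu_z, norm_smul, Real.norm_eq_abs, abs_neg, abs_of_pos ht0, mul_pow]
  have hn2 : ‖v - z‖ ^ 2 = (1 - t) ^ 2 * ‖v - u‖ ^ 2 := by
    rw [hv_z, norm_smul, Real.norm_eq_abs, abs_of_pos (by linarith : (0:ℝ) < 1 - t), mul_pow]
  have plin : (1 - t) * (p (u - z)) + t * (p (v - z)) = 0 := by
    rw [hu_z, hv_z, map_smul, map_smul]
    simp only [smul_eq_mul]
    ring
  rw [hn1] at h1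
  rw [hn2] at h2
  have e1 := mul_le_mul_of_nonneg_left h1 (by linarith : (0:ℝ) ≤ 1 - t)
  have e2 := mul_le_mul_of_nonneg_left h2 ht0.le
  nlinarith [e1, e2, plin]

lemma lagrange_mult {E : Type*} [NormedAddCommGroup E] [NormedSpace ℝ E]
    (X : Set E) (hXconv : Convex ℝ X)
    (f g : E → ℝ) (hf : ConvexOn ℝ X f) (hg : ConvexOn ℝ X g)
    (xbar : E) (hxbarX : xbar ∈ X) (hgxbar : g xbar < 0)
    (xs : E) (hxs : xs ∈ X) (hgxs : g xs ≤ 0)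
    (hopt : ∀ y ∈ X, g y ≤ 0 → f xs ≤ f y) :
    ∃ lam : ℝ, 0 ≤ lam ∧ ∀ x ∈ X, 0 ≤ (f x - f xs) + lam * g x := by
  set A : Set (ℝ × ℝ) := {p | ∃ x ∈ X, f x - f xs ≤ p.1 ∧ g x ≤ p.2} with hA
  have hAconv : Convex ℝ A := by
    rintro ⟨u1, v1⟩ ⟨x1, hx1, hu1, hv1⟩ ⟨u2, v2⟩ ⟨x2, hx2, hu2, hv2⟩ a b ha hb hab
    refine ⟨a • x1 + b • x2, hXconv hx1 hx2 ha hb hab, ?_, ?_⟩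
    · have h := hf.2 hx1 hx2 ha hb hab
      have hfs : a * f xs + b * f xs = f xs := by rw [← add_mul, hab, one_mul]
      simp only [Prod.smul_mk, Prod.mk_add_mk, smul_eq_mul] at *
      nlinarith [mul_le_mul_of_nonneg_left hu1 ha, mul_le_mul_of_nonneg_left hu2 hb]
    · have h := hg.2 hx1 hx2 ha hb hab
      simp only [Prod.smul_mk, Prod.mk_add_mk, smul_eq_mul] at *
      nlinarith [mul_le_mul_of_nonneg_left hv1 ha, mul_le_mul_of_nonneg_left hv2 hb]
  set B : Set (ℝ × ℝ) := {p | p.1 < 0 ∧ p.2 < 0} with hB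
  have hBopen : IsOpen B := (isOpen_lt continuous_fst continuous_const).inter
    (isOpen_lt continuous_snd continuous_const)
  have hBconv : Convex ℝ B := by
    rintro ⟨u1, v1⟩ ⟨h1, h2⟩ ⟨u2, v2⟩ ⟨h3, h4⟩ a b ha hb hab
    constructor
    · simp only [Prod.smul_mk, Prod.mk_add_mk, smul_eq_mul]
      rcases eq_or_lt_of_le ha with rfl | ha'
      · simp only [zero_mul, zero_add]; nlinarith
      · nlinarith
    · simp only [Prod.smul_mk, Prod.mk_add_mk, smul_eq_mul]
      rcases eq_or_lt_of_le ha with rfl | ha'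
      · simp only [zero_mul, zero_add]; nlinarith
      · nlinarith
  have hdisj : Disjoint B A := by
    rw [Set.disjoint_left]
    rintro ⟨u, v⟩ ⟨hu, hv⟩ ⟨x, hx, hfx, hgx⟩
    simp only at hu hv hfx hgx
    have := hopt x hx (by linarith)
    linarith
  obtain ⟨φ, c, hφB, hφA⟩ := geometric_hahn_banach_open hBconv hBopen hAconv hdisj
  set a : ℝ := φ (1, 0) with ha
  set b : ℝ := φ (0, 1) with hb
  have hdec : ∀ u v : ℝ, φ (u, v) = u * a + v * b := by
    intro u v
    have : ((u, v) : ℝ × ℝ) = u • ((1:ℝ), (0:ℝ)) + v • ((0:ℝ), (1:ℝ)) := by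
      simp [Prod.ext_iff]
    rw [this, map_add, map_smul, map_smul, smul_eq_mul, smul_eq_mul]
  -- 0 ≤ c
  have hc0 : 0 ≤ c := by
    have key : ∀ δ : ℝ, 0 < δ → -δ * a + -δ * b < c := by
      intro δ hδ
      have := hφB (-δ, -δ) ⟨by simpa using hδ, by simpa using hδ⟩
      rwa [hdec] at this
    have htend : Tendsto (fun δ : ℝ => -δ * a + -δ * b) (𝓝[>] (0:ℝ)) (𝓝 0) := by
      have hcont : Continuous fun δ : ℝ => -δ * a + -δ * b := by fun_prop
      have := hcont.tendsto 0
      simp only [neg_zero, zero_mul, add_zero, zero_add] at this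
      exact this.mono_left nhdsWithin_le_nhds
    refine le_of_tendsto htend ?_
    filter_upwards [self_mem_nhdsWithin] with δ hδ
    exact (key δ hδ).le
  have ha0 : 0 ≤ a := by
    by_contra hneg
    push_neg at hneg
    set n : ℝ := max 1 ((c + b) / (-a) + 1) with hn
    have hn1 : (1:ℝ) ≤ n := le_max_left _ _
    have hn2 : (c + b) / (-a) + 1 ≤ n := le_max_right _ _
    have hkey := hφB (-n, -1) ⟨by simp; linarith, by norm_num⟩
    rw [hdec] at hkey
    have hna : c + b + (-a) ≤ n * (-a) := by
      have := mul_le_mul_of_nonneg_right hn2 (by linarith : (0:ℝ) ≤ -a)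
      rwa [add_mul, div_mul_cancel₀ _ (by linarith : (-a) ≠ 0), one_mul] at this
    nlinarith
  have hb0 : 0 ≤ b := by
    by_contra hneg
    push_neg at hneg
    set n : ℝ := max 1 ((c + a) / (-b) + 1) with hn
    have hn2 : (c + a) / (-b) + 1 ≤ n := le_max_right _ _
    have hkey := hφB (-1, -n) ⟨by norm_num, by simp; linarith [le_max_left (1:ℝ) ((c + a) / (-b) + 1)]⟩
    rw [hdec] at hkey
    have hna : c + a + (-b) ≤ n * (-b) := by
      have := mul_le_mul_of_nonneg_right hn2 (by linarith : (0:ℝ) ≤ -b)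
      rwa [add_mul, div_mul_cancel₀ _ (by linarith : (-b) ≠ 0), one_mul] at this
    nlinarith
  have hkeyA : ∀ x ∈ X, 0 ≤ a * (f x - f xs) + b * g x := by
    intro x hx
    have := hφA (f x - f xs, g x) ⟨x, hx, le_refl _, le_refl _⟩
    rw [hdec] at this
    linarith
  have hapos : 0 < a := by
    rcases eq_or_lt_of_le ha0 with heq | h
    · exfalso
      have h1 := hkeyA xbar hxbarX
      rw [← heq] at h1
      simp only [zero_mul, zero_add] at h1
      have hbz : b = 0 := by nlinarith
      have h2 := hφB (-1, -1) ⟨by norm_num, by norm_num⟩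
      rw [hdec] at h2
      have h3 := hφA (0, g xs) ⟨xs, hxs, by norm_num, le_refl _⟩
      rw [hdec] at h3
      rw [← heq, hbz] at h2 h3
      simp at h2 h3
      linarith
    · exact h
  refine ⟨b / a, div_nonneg hb0 hapos.le, fun x hx => ?_⟩
  have h1 := hkeyA x hx
  have : (f x - f xs) + b / a * g x = (a * (f x - f xs) + b * g x) / a := by
    field_simp
  rw [this]
  positivity

end Aux

lemma le_at_zero {P Q : ℝ → ℝ} (hP : Continuous P) (hQ : Continuous Q)
    (h : ∀ s ∈ Set.Ioo (0:ℝ) 1, P s ≤ Q s) : P 0 ≤ Q 0 := by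
  have hPt : Tendsto P (𝓝[>] (0:ℝ)) (𝓝 (P 0)) := (hP.tendsto 0).mono_left nhdsWithin_le_nhds
  have hQt : Tendsto Q (𝓝[>] (0:ℝ)) (𝓝 (Q 0)) := (hQ.tendsto 0).mono_left nhdsWithin_le_nhds
  refine le_of_tendsto_of_tendsto hPt hQt ?_
  filter_upwards [Ioo_mem_nhdsGT_of_mem (left_mem_Ico.2 zero_lt_one)] with s hs
  exact h s hs


/-- If `f` and `g` are `μ`-strongly convex on `X`, the problem
`min {f(x) : x ∈ X, g(x) ≤ 0}` is regular (Slater point in the relative interior),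
`x_*` is a solution of this problem, and `x̃ ∈ X` satisfies
`f(x̃) − f(x_*) ≤ ε` and `g(x̃) ≤ ε`, then `μ/2 ‖x̃ − x_*‖² ≤ ε`. -/
theorem strongly_convex_func_to_arg
    {E : Type*} [NormedAddCommGroup E] [NormedSpace ℝ E] [FiniteDimensional ℝ E]
    (X : Set E) (hXcl : IsClosed X) (hXconv : Convex ℝ X)
    (f g : E → ℝ) (hf : ConvexOn ℝ X f) (hg : ConvexOn ℝ X g)
    (μ : ℝ) (hμ : 0 < μ)
    (hfsc : ∀ x ∈ X, ∀ p : E →L[ℝ] ℝ, IsSubgradOn X f x p →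
      ∀ y ∈ X, f x + p (y - x) + μ / 2 * ‖y - x‖ ^ 2 ≤ f y)
    (hgsc : ∀ x ∈ X, ∀ p : E →L[ℝ] ℝ, IsSubgradOn X g x p →
      ∀ y ∈ X, g x + p (y - x) + μ / 2 * ‖y - x‖ ^ 2 ≤ g y)
    (xbar : E) (hxbar : xbar ∈ intrinsicInterior ℝ X) (hgxbar : g xbar < 0)
    (xs : E) (hxs : xs ∈ X) (hgxs : g xs ≤ 0)
    (hopt : ∀ y ∈ X, g y ≤ 0 → f xs ≤ f y)
    (ε : ℝ) (xt : E) (hxt : xt ∈ X)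
    (hfε : f xt - f xs ≤ ε) (hgε : g xt ≤ ε) :
    μ / 2 * ‖xt - xs‖ ^ 2 ≤ ε := by
  have hxbarX : xbar ∈ X := intrinsicInterior_subset hxbar
  obtain ⟨lam, hlam0, hkey⟩ := lagrange_mult X hXconv f g hf hg xbar hxbarX hgxbar xs hxs hgxs hopt
  set d2 : ℝ := ‖xt - xs‖ ^ 2 with hd2
  have hd2nn : 0 ≤ d2 := by positivity
  have hmin : ∀ z ∈ X, f xs ≤ f z + lam * g z := fun z hz => by have := hkey z hz; linarith
  have claim1 : ∀ t ∈ Set.Ioo (0:ℝ) 1, ∀ s ∈ Set.Ioo (0:ℝ) 1,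
      f xs + (1 + lam) * (μ / 2) * (t * (1 - t)) * (1 - s) ^ 2 * d2
        ≤ (1 - s) * ((1 - t) * f xs + t * (f xt + lam * g xt))
          + s * (f xbar + lam * g xbar) := by
    intro t ht s hs
    set us := (1 - s) • xs + s • xbar with hus
    set vs := (1 - s) • xt + s • xbar with hvs
    have husX : us ∈ X := hXconv hxs hxbarX (by linarith [hs.2]) hs.1.le (by ring)
    have hvsX : vs ∈ X := hXconv hxt hxbarX (by linarith [hs.2]) hs.1.le (by ring)
    have hzmem : (1 - t) • us + t • vs ∈ intrinsicInterior ℝ X := by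
      have hwX : (1 - t) • xs + t • xt ∈ X :=
        hXconv hxs hxt (by linarith [ht.2]) ht.1.le (by ring)
      have heq : (1 - t) • us + t • vs = (1 - s) • ((1 - t) • xs + t • xt) + s • xbar := by
        rw [hus, hvs]; module
      rw [heq]
      exact intrinsic_combo hXconv hxbar hwX hs.1 hs.2.le
    have hF := strong_combo hXconv hf hfsc husX hvsX ht.1 ht.2 hzmem
    have hG := strong_combo hXconv hg hgsc husX hvsX ht.1 ht.2 hzmem
    have hnorm : ‖vs - us‖ ^ 2 = (1 - s) ^ 2 * d2 := by
      have heq : vs - us = (1 - s) • (xt - xs) := by rw [hus, hvs]; module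
      rw [heq, norm_smul, Real.norm_eq_abs,
        abs_of_pos (by linarith [hs.2] : (0:ℝ) < 1 - s), mul_pow, hd2]
    rw [hnorm] at hF hG
    have hzX : (1 - t) • us + t • vs ∈ X := intrinsicInterior_subset hzmem
    have hminz := hmin _ hzX
    have hfus : f us ≤ (1 - s) * f xs + s * f xbar :=
      hf.2 hxs hxbarX (by linarith [hs.2]) hs.1.le (by ring)
    have hfvs : f vs ≤ (1 - s) * f xt + s * f xbar :=
      hf.2 hxt hxbarX (by linarith [hs.2]) hs.1.le (by ring)
    have hgus : g us ≤ (1 - s) * g xs + s * g xbar :=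
      hg.2 hxs hxbarX (by linarith [hs.2]) hs.1.le (by ring)
    have hgvs : g vs ≤ (1 - s) * g xt + s * g xbar :=
      hg.2 hxt hxbarX (by linarith [hs.2]) hs.1.le (by ring)
    have hGl := mul_le_mul_of_nonneg_left hG hlam0
    have e1 := mul_le_mul_of_nonneg_left hfus (by linarith [ht.2] : (0:ℝ) ≤ 1 - t)
    have e2 := mul_le_mul_of_nonneg_left hfvs ht.1.le
    have e3 := mul_le_mul_of_nonneg_left hgus
      (mul_nonneg hlam0 (by linarith [ht.2] : (0:ℝ) ≤ 1 - t))
    have e4 := mul_le_mul_of_nonneg_left hgvs (mul_nonneg hlam0 ht.1.le)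
    have e5 : lam * (1 - t) * ((1 - s) * g xs) ≤ 0 := by
      apply mul_nonpos_of_nonneg_of_nonpos
        (mul_nonneg hlam0 (by linarith [ht.2] : (0:ℝ) ≤ 1 - t))
      exact mul_nonpos_of_nonneg_of_nonpos (by linarith [hs.2]) hgxs
    linarith [hminz, hF, hGl, e1, e2, e3, e4, e5]
  have claim2 : ∀ t ∈ Set.Ioo (0:ℝ) 1,
      f xs + (1 + lam) * (μ / 2) * (t * (1 - t)) * d2
        ≤ (1 - t) * f xs + t * (f xt + lam * g xt) := by
    intro t ht
    have hP : Continuous fun s : ℝ =>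
        f xs + (1 + lam) * (μ / 2) * (t * (1 - t)) * (1 - s) ^ 2 * d2 := by fun_prop
    have hQ : Continuous fun s : ℝ =>
        (1 - s) * ((1 - t) * f xs + t * (f xt + lam * g xt))
          + s * (f xbar + lam * g xbar) := by fun_prop
    have := le_at_zero hP hQ (fun s hs => claim1 t ht s hs)
    norm_num at this
    linarith
  have claim3 : ∀ t ∈ Set.Ioo (0:ℝ) 1,
      (1 + lam) * (μ / 2) * (1 - t) * d2 ≤ (f xt + lam * g xt) - f xs := by
    intro t ht
    have h2 := claim2 t ht
    have h' : t * ((1 + lam) * (μ / 2) * (1 - t) * d2)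
        ≤ t * ((f xt + lam * g xt) - f xs) := by linarith [h2]
    exact le_of_mul_le_mul_left h' ht.1
  have claim4 : (1 + lam) * (μ / 2) * d2 ≤ (f xt + lam * g xt) - f xs := by
    have hP : Continuous fun t : ℝ => (1 + lam) * (μ / 2) * (1 - t) * d2 := by fun_prop
    have hQ : Continuous fun _ : ℝ => (f xt + lam * g xt) - f xs := by fun_prop
    have := le_at_zero hP hQ claim3
    norm_num at this
    linarith
  have hlg : lam * g xt ≤ lam * ε := mul_le_mul_of_nonneg_left hgε hlam0
  have hfinal : (1 + lam) * (μ / 2 * d2) ≤ (1 + lam) * ε := by linarith [claim4, hlg, hfε]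
  exact le_of_mul_le_mul_left hfinal (by linarith)
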